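/- In the subset construction subsetT applied to an FST, for every subset S of FST states and every input symbol σ, the behaviour of the Mealy state T(S,σ) on any nonempty input word w equals the union over s ∈ S and over states p reachable from s by σ of B(p)(w). -/
import Mathlib


/-- A finite-state transducer: a nondeterministic machine reading input symbols from `σ`
(or `ε`, encoded `none`) and possibly emitting output symbols from `γ`. -/
structure FST (Q : Type) (σ : Type) (γ : Type) where
  step : Q → Option σ → Option γ → Q → Prop
  I : Set Q
  F : Set Q

namespace FST

variable {Q σ γ : Type} (M : FST Q σ γ)

/-- One ε-transition (possibly with output). -/
def EpsStep (p q : Q) : Prop := ∃ g, M.step p none g q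

/-- `q` is in the ε-closure of `p`. -/
def EpsCl (p q : Q) : Prop := Relation.ReflTransGen M.EpsStep p q

/-- ε-closure of a set of states. -/
def epsClSet (S : Set Q) : Set Q := {q | ∃ p ∈ S, M.EpsCl p q}

/-- `Reads p w q`: from `p` the machine may reach `q` reading the input word `w`,
with ε-transitions interleaved anywhere. -/
inductive Reads : Q → List σ → Q → Prop
  | refl (p : Q) : Reads p [] p
  | eps {p q r : Q} {w : List σ} : M.EpsStep p q → Reads q w r → Reads p w r
  | cons {p q r : Q} {a : σ} {w : List σ} (g : Option γ) :
      M.step p (some a) g q → Reads q w r → Reads p (a :: w) r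

/-- `B(p)(ε)`: outputs emittable from `p` by ε-transitions only. -/
def behNil (p : Q) : Set γ := {g | ∃ q r, M.EpsCl p q ∧ M.step q none (some g) r}

/-- The behaviour of state `p`: `B(p)(ε)` is `behNil p`, and `B(p)(w·a)` is the set of outputs
emitted on the transition reading the final `a` or by ε-transitions immediately afterwards. -/
def beh (p : Q) (w : List σ) : Set γ :=
  {g | (w = [] ∧ g ∈ M.behNil p) ∨
    ∃ w' a, w = w' ++ [a] ∧ ∃ (g' : Option γ) (q r : Q),
      M.Reads p w' q ∧ M.step q (some a) g' r ∧ (some g = g' ∨ g ∈ M.behNil r)}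

/-- The behaviour of the transducer: the union of the behaviours of its initial states. -/
def machineBeh (w : List σ) : Set γ := ⋃ i ∈ M.I, M.beh i w

/-- Transition function `T` of the subset construction `subsetT`. -/
def Tfun (S : Set Q) (a : σ) : Set Q :=
  M.epsClSet {q | ∃ p ∈ S, ∃ g, M.step p (some a) g q}

/-- Output function `G` of the subset construction `subsetT`. -/
def Gfun (S : Set Q) (a : σ) : Set γ :=
  {g | ∃ p ∈ S, ∃ q, M.step p (some a) (some g) q} ∪
  {g | ∃ p ∈ M.Tfun S a, ∃ q ∈ M.Tfun S a, M.step p none (some g) q}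

/-- Iterating `T` along a word. -/
def runT (S : Set Q) (w : List σ) : Set Q := w.foldl M.Tfun S

/-- The behaviour of the state `S` of the Mealy machine `subsetT M`:
nothing is emitted on the empty word, and on `w·a` the output is `G(runT S w, a)`. -/
def subsetBeh (S : Set Q) (w : List σ) : Set γ :=
  {g | ∃ w' a, w = w' ++ [a] ∧ g ∈ M.Gfun (M.runT S w') a}

/-- Transition function `T'` of the modified subset construction `subsetTC`,
which adds the initial closure to every transition target. -/
def TCfun (S : Set Q) (a : σ) : Set Q := M.Tfun S a ∪ M.epsClSet M.I

/-- Iterating `T'` along a word. -/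
def runTC (S : Set Q) (w : List σ) : Set Q := w.foldl M.TCfun S

/-- The behaviour of the Mealy machine computed by `subsetTC`, from its initial state `ε(I)`. -/
def subsetTCBeh (w : List σ) : Set γ :=
  {g | ∃ w' a, w = w' ++ [a] ∧ g ∈ M.Gfun (M.runTC (M.epsClSet M.I) w') a}

end FST

namespace FST

variable {Q σ γ : Type} (M : FST Q σ γ)

/-- A set of states is ε-closed. -/
def Closed (X : Set Q) : Prop := ∀ ⦃p q⦄, p ∈ X → M.EpsCl p q → q ∈ X

lemma closed_epsClSet (Y : Set Q) : M.Closed (M.epsClSet Y) := by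
  rintro p q ⟨r, hr, hrp⟩ hpq
  exact ⟨r, hr, hrp.trans hpq⟩

lemma closed_Tfun (X : Set Q) (a : σ) : M.Closed (M.Tfun X a) := M.closed_epsClSet _

lemma reads_of_epsCl {p q r : Q} {w : List σ} (h : M.EpsCl p q) (h2 : M.Reads q w r) :
    M.Reads p w r := by
  induction h using Relation.ReflTransGen.head_induction_on with
  | refl => exact h2
  | head hstep _ ih => exact Reads.eps hstep ih

lemma epsCl_of_reads_nil {p q : Q} {w : List σ} (h : M.Reads p w q) (hw : w = []) :
    M.EpsCl p q := by
  induction h with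
  | refl => exact Relation.ReflTransGen.refl
  | eps h1 _ ih => exact Relation.ReflTransGen.head h1 (ih hw)
  | cons g h1 h2 ih => simp at hw

lemma reads_cons_aux {p r : Q} {v : List σ} (h : M.Reads p v r) :
    ∀ (b : σ) (w : List σ), v = b :: w →
      ∃ p' q, M.EpsCl p p' ∧ (∃ g, M.step p' (some b) g q) ∧ M.Reads q w r := by
  induction h with
  | refl p => intro b w h; simp at h
  | eps h1 _ ih =>
      intro b w hbw
      obtain ⟨p', q, h3, h4, h5⟩ := ih b w hbw
      exact ⟨p', q, Relation.ReflTransGen.head h1 h3, h4, h5⟩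
  | cons g h1 h2 _ =>
      intro b w hbw
      injection hbw with h1' h2'
      subst h1'; subst h2'
      exact ⟨_, _, Relation.ReflTransGen.refl, ⟨g, h1⟩, h2⟩

lemma reads_cons {p r : Q} {b : σ} {w : List σ} :
    M.Reads p (b :: w) r ↔
      ∃ p' q, M.EpsCl p p' ∧ (∃ g, M.step p' (some b) g q) ∧ M.Reads q w r := by
  constructor
  · intro h; exact M.reads_cons_aux h b w rfl
  · rintro ⟨p', q, h1, ⟨g, h2⟩, h3⟩
    exact M.reads_of_epsCl h1 (Reads.cons g h2 h3)

lemma beh_ne {p : Q} {g : γ} {w : List σ} (hw : w ≠ []) :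
    g ∈ M.beh p w ↔ ∃ w' a, w = w' ++ [a] ∧ ∃ (g' : Option γ) (q r : Q),
      M.Reads p w' q ∧ M.step q (some a) g' r ∧ (some g = g' ∨ g ∈ M.behNil r) := by
  simp [beh, hw]

lemma beh_epsCl_subset {p q : Q} {w : List σ} (hw : w ≠ []) (h : M.EpsCl p q) :
    M.beh q w ⊆ M.beh p w := by
  intro g hg
  rw [M.beh_ne hw] at hg ⊢
  obtain ⟨w', a, h1, g', u, r, h2, h3, h4⟩ := hg
  exact ⟨w', a, h1, g', u, r, M.reads_of_epsCl h h2, h3, h4⟩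

lemma iUnion_beh_epsClSet (Y : Set Q) {w : List σ} (hw : w ≠ []) :
    ⋃ p ∈ M.epsClSet Y, M.beh p w = ⋃ p ∈ Y, M.beh p w := by
  apply subset_antisymm
  · intro g hg
    simp only [Set.mem_iUnion] at hg ⊢
    obtain ⟨p, ⟨q, hq, hcl⟩, hg⟩ := hg
    exact ⟨q, hq, M.beh_epsCl_subset hw hcl hg⟩
  · intro g hg
    simp only [Set.mem_iUnion] at hg ⊢
    obtain ⟨p, hp, hg⟩ := hg
    exact ⟨p, ⟨p, hp, Relation.ReflTransGen.refl⟩, hg⟩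

lemma iUnion_beh_cons (X : Set Q) (hX : M.Closed X) (b : σ) {w : List σ} (hw : w ≠ []) :
    ⋃ p ∈ X, M.beh p (b :: w) = ⋃ p ∈ M.Tfun X b, M.beh p w := by
  rw [Tfun, M.iUnion_beh_epsClSet _ hw]
  apply subset_antisymm
  · intro g hg
    simp only [Set.mem_iUnion] at hg ⊢
    obtain ⟨p, hp, hg⟩ := hg
    rw [M.beh_ne (by simp)] at hg
    obtain ⟨w', a, h1, g', u, r, h2, h3, h4⟩ := hg
    cases w' with
    | nil => simp at h1; exact absurd h1.2 hw
    | cons b' w'' =>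
      injection h1 with h1a h1b
      subst h1a
      rw [M.reads_cons] at h2
      obtain ⟨p', q1, hcl, ⟨g0, hst⟩, hrd⟩ := h2
      refine ⟨q1, ⟨p', hX hp hcl, g0, hst⟩, ?_⟩
      rw [M.beh_ne hw]
      exact ⟨w'', a, h1b, g', u, r, hrd, h3, h4⟩
  · intro g hg
    simp only [Set.mem_iUnion] at hg ⊢
    obtain ⟨q1, ⟨p, hp, g0, hst⟩, hg⟩ := hg
    rw [M.beh_ne hw] at hg
    obtain ⟨w', a, h1, g', u, r, h2, h3, h4⟩ := hg
    refine ⟨p, hp, ?_⟩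
    rw [M.beh_ne (by simp)]
    exact ⟨b :: w', a, by rw [h1]; rfl, g', u, r, Reads.cons g0 hst h2, h3, h4⟩

lemma subsetBeh_singleton (X : Set Q) (b : σ) :
    M.subsetBeh X [b] = M.Gfun X b := by
  ext g
  simp only [subsetBeh, Set.mem_setOf_eq]
  constructor
  · rintro ⟨w', c, h1, h2⟩
    cases w' with
    | nil =>
      simp only [List.nil_append, List.cons.injEq] at h1
      obtain ⟨rfl, -⟩ := h1
      exact h2
    | cons b' w'' =>
      injection h1 with h1a h1b
      exact absurd h1b (by simp)
  · intro h
    exact ⟨[], b, rfl, h⟩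

lemma Gfun_eq_iUnion (X : Set Q) (hX : M.Closed X) (b : σ) :
    M.Gfun X b = ⋃ p ∈ X, M.beh p [b] := by
  ext g
  simp only [Set.mem_iUnion]
  constructor
  · rintro (⟨p, hp, q, hst⟩ | ⟨p, ⟨p0, ⟨s, hs, g0, hst0⟩, hcl⟩, q, -, hst⟩)
    · refine ⟨p, hp, ?_⟩
      rw [M.beh_ne (by simp)]
      exact ⟨[], b, rfl, some g, p, q, Reads.refl p, hst, Or.inl rfl⟩
    · refine ⟨s, hs, ?_⟩
      rw [M.beh_ne (by simp)]
      exact ⟨[], b, rfl, g0, s, p0, Reads.refl s, hst0, Or.inr ⟨p, q, hcl, hst⟩⟩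
  · rintro ⟨p, hp, hg⟩
    rw [M.beh_ne (by simp)] at hg
    obtain ⟨w', a, h1, g', q, r, h2, h3, h4⟩ := hg
    cases w' with
    | cons b' w'' =>
      injection h1 with h1a h1b
      exact absurd h1b.symm (by simp)
    | nil =>
      simp only [List.nil_append, List.cons.injEq] at h1
      obtain ⟨rfl, -⟩ := h1
      have hq : q ∈ X := hX hp (M.epsCl_of_reads_nil h2 rfl)
      rcases h4 with h4 | ⟨u, v, hcl, hst⟩
      · exact Or.inl ⟨q, hq, r, h4 ▸ h3⟩
      · refine Or.inr ⟨u, ⟨r, ⟨q, hq, g', h3⟩, hcl⟩, v,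
          ⟨r, ⟨q, hq, g', h3⟩, hcl.trans (Relation.ReflTransGen.single ⟨some g, hst⟩)⟩, hst⟩

lemma subsetBeh_cons (X : Set Q) (b : σ) {w : List σ} (hw : w ≠ []) :
    M.subsetBeh X (b :: w) = M.subsetBeh (M.Tfun X b) w := by
  ext g
  simp only [subsetBeh, Set.mem_setOf_eq]
  constructor
  · rintro ⟨w', c, h1, h2⟩
    cases w' with
    | nil =>
      simp only [List.nil_append, List.cons.injEq] at h1
      exact absurd h1.2 hw
    | cons b' w'' =>
      injection h1 with h1a h1b
      subst h1a
      exact ⟨w'', c, h1b, h2⟩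
  · rintro ⟨w', c, h1, h2⟩
    exact ⟨b :: w', c, by rw [h1]; rfl, h2⟩

lemma subsetBeh_closed_eq (w : List σ) : ∀ (X : Set Q), M.Closed X → w ≠ [] →
    M.subsetBeh X w = ⋃ p ∈ X, M.beh p w := by
  induction w with
  | nil => intro X _ hw; exact absurd rfl hw
  | cons b w ih =>
    intro X hX _
    rcases eq_or_ne w [] with rfl | hw
    · rw [M.subsetBeh_singleton, M.Gfun_eq_iUnion X hX]
    · rw [M.subsetBeh_cons X b hw, ih _ (M.closed_Tfun X b) hw,
        M.iUnion_beh_cons X hX b hw]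

end FST

/-- In `subsetT`, for every subset `S` of FST states and input symbol `a`,
the behaviour of the Mealy state `T(S,a)` on any nonempty word `w` is the union, over `s ∈ S`
and states `p` reachable from `s` by `a`, of the behaviours `B(p)(w)`. -/
theorem stmt4 {Q σ γ : Type} (M : FST Q σ γ) (S : Set Q) (a : σ) (w : List σ)
    (hw : w ≠ []) :
    M.subsetBeh (M.Tfun S a) w =
      ⋃ s ∈ S, ⋃ p ∈ {r | ∃ g, M.step s (some a) g r}, M.beh p w := by
  rw [M.subsetBeh_closed_eq w _ (M.closed_Tfun S a) hw, FST.Tfun,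
    M.iUnion_beh_epsClSet _ hw]
  ext g
  simp only [Set.mem_iUnion, Set.mem_setOf_eq]
  constructor
  · rintro ⟨p, ⟨s, hs, g0, hst⟩, hg⟩
    exact ⟨s, hs, p, ⟨g0, hst⟩, hg⟩
  · rintro ⟨s, hs, p, ⟨g0, hst⟩, hg⟩
    exact ⟨p, ⟨s, hs, g0, hst⟩, hg⟩
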